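/- If h = 1_{(−∞,z]} for some z ∈ ℝ, then the solution y of the Stein equation satisfies sup_{x∈ℝ} |x·y(x)| ≤ 1/(1−ψ). -/

import Mathlib

open MeasureTheory ProbabilityTheory Real Set

noncomputable section

/-- `h̄_ψ = E h(N)` for `N ~ N(0, (1-ψ)⁻¹)`. -/
def gaussMean (ψ : ℝ) (h : ℝ → ℝ) : ℝ :=
  ∫ x, h x ∂(gaussianReal 0 (Real.toNNReal (1 - ψ)⁻¹))

/-- The bounded solution `y` of the Stein equation
`y'(x) - (1-ψ) x y(x) = h(x) - h̄_ψ`, given explicitly by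
`y(x) = -e^{(1-ψ)x²/2} ∫_x^∞ e^{-(1-ψ)t²/2} (h(t) - h̄_ψ) dt`. -/
def steinSol (ψ : ℝ) (h : ℝ → ℝ) (x : ℝ) : ℝ :=
  - Real.exp ((1 - ψ) * x ^ 2 / 2) *
      ∫ t in Set.Ioi x, Real.exp (-((1 - ψ) * t ^ 2 / 2)) * (h t - gaussMean ψ h)

namespace Stmt8Aux

open Filter

lemma tendstoF (a : ℝ) (ha : 0 < a) :
    Tendsto (fun t : ℝ => -Real.exp (-(a*t^2/2))/a) atTop (nhds 0) := by
  have h1 : Tendsto (fun t : ℝ => a*t^2/2) atTop atTop := by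
    apply Tendsto.atTop_div_const (by norm_num)
    exact (tendsto_pow_atTop two_ne_zero).const_mul_atTop ha
  have h2 : Tendsto (fun t : ℝ => Real.exp (-(a*t^2/2))) atTop (nhds 0) :=
    Real.tendsto_exp_atBot.comp (tendsto_neg_atTop_atBot.comp h1)
  have h3 := (h2.div_const a).neg
  simp only [neg_div] at h3 ⊢
  simpa using h3

lemma derivF (a : ℝ) (ha : 0 < a) (t : ℝ) :
    HasDerivAt (fun t => -Real.exp (-(a*t^2/2))/a) (t * Real.exp (-(a*t^2/2))) t := by
  have ha' : a ≠ 0 := ne_of_gt ha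
  have h0 : HasDerivAt (fun t : ℝ => -(a*t^2/2)) (-(a*t)) t := by
    have := (((hasDerivAt_pow 2 t).const_mul a).div_const 2).fun_neg
    refine this.congr_deriv ?_
    ring
  have h1 := h0.exp
  have h2 := (h1.div_const a).fun_neg
  simp only [neg_div]
  refine h2.congr_deriv ?_
  field_simp

lemma intG (a : ℝ) (ha : 0 < a) : Integrable (fun t => Real.exp (-(a*t^2/2))) := by
  have h := integrable_exp_neg_mul_sq (show 0 < a/2 by linarith)
  convert h using 2 with t
  ring_nf

lemma intTG (a : ℝ) (ha : 0 < a) : Integrable (fun t => t * Real.exp (-(a*t^2/2))) := by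
  have h := integrable_mul_exp_neg_mul_sq (show 0 < a/2 by linarith)
  convert h using 2 with t
  ring_nf

lemma intValTG (a : ℝ) (ha : 0 < a) (x : ℝ) :
    ∫ t in Set.Ioi x, t * Real.exp (-(a*t^2/2)) = Real.exp (-(a*x^2/2)) / a := by
  have := integral_Ioi_of_hasDerivAt_of_tendsto' (a := x) (fun t _ => derivF a ha t)
    ((intTG a ha).integrableOn) (tendstoF a ha)
  rw [this]
  field_simp
  ring

lemma tailBound (a : ℝ) (ha : 0 < a) (x : ℝ) (hx : 0 < x) :
    ∫ t in Set.Ioi x, Real.exp (-(a*t^2/2)) ≤ Real.exp (-(a*x^2/2)) / (a*x) := by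
  have h1 : ∫ t in Set.Ioi x, Real.exp (-(a*t^2/2))
      ≤ ∫ t in Set.Ioi x, (t/x) * Real.exp (-(a*t^2/2)) := by
    apply setIntegral_mono_on ((intG a ha).integrableOn)
    · have := ((intTG a ha).div_const x).integrableOn (s := Set.Ioi x)
      convert this using 2 with t
      ring
    · exact measurableSet_Ioi
    · intro t ht
      have h2 : 1 ≤ t/x := (one_le_div hx).2 (le_of_lt ht)
      nlinarith [Real.exp_pos (-(a*t^2/2))]
  have h2 : ∫ t in Set.Ioi x, (t/x) * Real.exp (-(a*t^2/2))
      = (∫ t in Set.Ioi x, t * Real.exp (-(a*t^2/2)))/x := by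
    rw [← integral_div]
    congr 1; funext t; ring
  rw [h2, intValTG a ha x] at h1
  calc _ ≤ _ := h1
  _ = Real.exp (-(a*x^2/2)) / (a*x) := by field_simp

lemma pdf_eq (a : ℝ) (ha : 0 < a) (t : ℝ) :
    gaussianPDFReal 0 (Real.toNNReal a⁻¹) t
      = (Real.sqrt (2 * π / a))⁻¹ * Real.exp (-(a*t^2/2)) := by
  rw [gaussianPDFReal]
  have hv : ((Real.toNNReal a⁻¹ : NNReal) : ℝ) = a⁻¹ := Real.coe_toNNReal _ (by positivity)
  rw [hv]
  have ha' : a ≠ 0 := ne_of_gt ha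
  congr 2
  all_goals simp only [sub_zero]
  all_goals field_simp
  all_goals ring

lemma intValG (a : ℝ) (ha : 0 < a) :
    ∫ t, Real.exp (-(a*t^2/2)) = Real.sqrt (2 * π / a) := by
  have h := integral_gaussian (a/2)
  have he : ∀ t : ℝ, Real.exp (-(a/2) * t^2) = Real.exp (-(a*t^2/2)) := by
    intro t; ring_nf
  simp_rw [he] at h
  rw [h]
  congr 1
  field_simp

lemma mean_eq (ψ z : ℝ) (hψ1 : ψ < 1) :
    gaussMean ψ (Set.indicator (Set.Iic z) fun _ => (1:ℝ))
      = ∫ t in Set.Iic z, gaussianPDFReal 0 (Real.toNNReal (1-ψ)⁻¹) t := by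
  have h1 : (0:ℝ) < (1-ψ)⁻¹ := inv_pos.2 (by linarith)
  have hv : (Real.toNNReal (1-ψ)⁻¹) ≠ 0 := by
    simp only [ne_eq, Real.toNNReal_eq_zero, not_le]
    exact h1
  rw [gaussMean, integral_indicator_const (1:ℝ) measurableSet_Iic]
  rw [measureReal_def, gaussianReal_apply_eq_integral 0 hv]
  rw [ENNReal.toReal_ofReal (integral_nonneg (fun t => gaussianPDFReal_nonneg _ _ _))]
  simp

lemma zero_int (a : ℝ) (ha : 0 < a) (z m : ℝ)
    (hm : m = ∫ t in Set.Iic z, gaussianPDFReal 0 (Real.toNNReal a⁻¹) t) :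
    ∫ t, Real.exp (-(a*t^2/2)) * ((Set.indicator (Set.Iic z) fun _ => (1:ℝ)) t - m) = 0 := by
  have hC : 0 < Real.sqrt (2 * π / a) := Real.sqrt_pos.2 (by positivity)
  set C := Real.sqrt (2 * π / a) with hCdef
  set S := ∫ t in Set.Iic z, Real.exp (-(a*t^2/2)) with hSdef
  have hmS : m = C⁻¹ * S := by
    rw [hm]
    simp_rw [pdf_eq a ha]
    rw [integral_const_mul]
  have hprod : ∀ t, Real.exp (-(a*t^2/2)) * (Set.indicator (Set.Iic z) fun _ => (1:ℝ)) t
      = Set.indicator (Set.Iic z) (fun t => Real.exp (-(a*t^2/2))) t := by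
    intro t
    by_cases ht : t ∈ Set.Iic z
    · simp [Set.indicator_of_mem ht]
    · simp [Set.indicator_of_notMem ht]
  have hint1 : Integrable (fun t => Real.exp (-(a*t^2/2))
      * (Set.indicator (Set.Iic z) fun _ => (1:ℝ)) t) := by
    have := (intG a ha).indicator (measurableSet_Iic (a := z))
    refine this.congr ?_
    filter_upwards with t
    rw [hprod t]
  have hint2 : Integrable (fun t : ℝ => Real.exp (-(a*t^2/2)) * m) :=
    (intG a ha).mul_const m
  have hsplit : (∫ t, Real.exp (-(a*t^2/2)) * ((Set.indicator (Set.Iic z) fun _ => (1:ℝ)) t - m))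
      = (∫ t, Real.exp (-(a*t^2/2)) * (Set.indicator (Set.Iic z) fun _ => (1:ℝ)) t)
        - ∫ t, Real.exp (-(a*t^2/2)) * m := by
    rw [← integral_sub hint1 hint2]
    congr 1; funext t; ring
  rw [hsplit]
  have h1 : (∫ t, Real.exp (-(a*t^2/2)) * (Set.indicator (Set.Iic z) fun _ => (1:ℝ)) t) = S := by
    simp_rw [hprod]
    rw [integral_indicator measurableSet_Iic]
  have h2 : (∫ t, Real.exp (-(a*t^2/2)) * m) = C * m := by
    rw [integral_mul_const, intValG a ha]
  rw [h1, h2, hmS]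
  field_simp
  ring

end Stmt8Aux

open Stmt8Aux

theorem stmt8 (ψ : ℝ) (hψ0 : 0 ≤ ψ) (hψ1 : ψ < 1) (z : ℝ) :
    ∀ x : ℝ,
      |x * steinSol ψ (Set.indicator (Set.Iic z) fun _ => (1 : ℝ)) x| ≤ 1 / (1 - ψ) := by
  intro x
  have ha : 0 < 1 - ψ := by linarith
  set a := 1 - ψ with hadef
  set h : ℝ → ℝ := Set.indicator (Set.Iic z) fun _ => (1:ℝ) with hh
  set m := gaussMean ψ h with hmdef
  have hm : m = ∫ t in Set.Iic z, gaussianPDFReal 0 (Real.toNNReal a⁻¹) t := mean_eq ψ z hψ1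
  -- bounds on m
  have hm0 : 0 ≤ m := by
    rw [hm]
    exact integral_nonneg fun t => gaussianPDFReal_nonneg _ _ _
  have hm1 : m ≤ 1 := by
    have hv : (Real.toNNReal a⁻¹) ≠ 0 := by
      simp only [ne_eq, Real.toNNReal_eq_zero, not_le]
      positivity
    rw [hm]
    calc (∫ t in Set.Iic z, gaussianPDFReal 0 (Real.toNNReal a⁻¹) t)
        ≤ ∫ t, gaussianPDFReal 0 (Real.toNNReal a⁻¹) t :=
          setIntegral_le_integral (integrable_gaussianPDFReal _ _)
            (Filter.Eventually.of_forall fun t => gaussianPDFReal_nonneg _ _ _)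
      _ = 1 := integral_gaussianPDFReal_eq_one 0 hv
  -- pointwise bound
  have habs : ∀ t : ℝ, |Real.exp (-(a*t^2/2)) * (h t - m)| ≤ Real.exp (-(a*t^2/2)) := by
    intro t
    rw [abs_mul, abs_of_pos (Real.exp_pos _)]
    apply mul_le_of_le_one_right (le_of_lt (Real.exp_pos _))
    have hht : h t = 0 ∨ h t = 1 := by
      by_cases ht : t ∈ Set.Iic z
      · right; simp [hh, Set.indicator_of_mem ht]
      · left; simp [hh, Set.indicator_of_notMem ht]
    rcases hht with h0 | h0 <;> rw [h0] <;> rw [abs_le] <;> constructor <;> linarith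
  -- integrability
  have hmeas : AEStronglyMeasurable (fun t => Real.exp (-(a*t^2/2)) * (h t - m)) volume := by
    apply Measurable.aestronglyMeasurable
    exact (Real.measurable_exp.comp (by measurability)).mul
      (((measurable_const.indicator measurableSet_Iic)).sub measurable_const)
  have hfi : Integrable (fun t => Real.exp (-(a*t^2/2)) * (h t - m)) :=
    (intG a ha).mono' hmeas (Filter.Eventually.of_forall fun t => by
      rw [Real.norm_eq_abs]; exact habs t)
  -- rewrite the statement
  have hstein : steinSol ψ h x
      = -Real.exp (a*x^2/2) * ∫ t in Set.Ioi x, Real.exp (-(a*t^2/2)) * (h t - m) := rfl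
  rw [hstein]
  set I := ∫ t in Set.Ioi x, Real.exp (-(a*t^2/2)) * (h t - m) with hIdef
  have habsI : ∀ s : Set ℝ, |∫ t in s, Real.exp (-(a*t^2/2)) * (h t - m)|
      ≤ ∫ t in s, Real.exp (-(a*t^2/2)) := by
    intro s
    have := norm_integral_le_of_norm_le (μ := volume.restrict s)
      ((intG a ha).integrableOn) (Filter.Eventually.of_forall fun t => by
        rw [Real.norm_eq_abs]; exact habs t)
    simpa [Real.norm_eq_abs] using this
  have hrw : |x * (-Real.exp (a*x^2/2) * I)| = |x| * Real.exp (a*x^2/2) * |I| := by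
    rw [abs_mul, abs_mul, abs_neg, abs_of_pos (Real.exp_pos _)]
    ring
  rw [hrw]
  rcases lt_trichotomy x 0 with hx | hx | hx
  · -- x < 0 : use zero total integral
    have hzero := zero_int a ha z m hm
    have hIic : I = -∫ t in Set.Iic x, Real.exp (-(a*t^2/2)) * (h t - m) := by
      have := intervalIntegral.integral_Iic_add_Ioi (b := x) hfi.integrableOn hfi.integrableOn
      rw [hzero] at this
      rw [← hIdef] at this
      linarith
    have hb1 : |I| ≤ ∫ t in Set.Iic x, Real.exp (-(a*t^2/2)) := by
      rw [hIic, abs_neg]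
      exact habsI _
    have hsym : (∫ t in Set.Iic x, Real.exp (-(a*t^2/2)))
        = ∫ t in Set.Ioi (-x), Real.exp (-(a*t^2/2)) := by
      have h0 := integral_comp_neg_Iic x (fun t => Real.exp (-(a*t^2/2)))
      have he : ∀ t : ℝ, Real.exp (-(a*(-t)^2/2)) = Real.exp (-(a*t^2/2)) := by
        intro t; ring_nf
      simp_rw [he] at h0
      exact h0
    have hb2 : |I| ≤ Real.exp (-(a*x^2/2)) / (a * (-x)) := by
      have := tailBound a ha (-x) (by linarith)
      have hsq : (-x)^2 = x^2 := by ring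
      rw [hsq] at this
      calc |I| ≤ _ := hb1
        _ = _ := hsym
        _ ≤ _ := this
    have hax : |x| = -x := abs_of_neg hx
    rw [hax]
    calc (-x) * Real.exp (a*x^2/2) * |I|
        ≤ (-x) * Real.exp (a*x^2/2) * (Real.exp (-(a*x^2/2)) / (a * (-x))) := by
          apply mul_le_mul_of_nonneg_left hb2
            (mul_nonneg (by linarith) (Real.exp_pos _).le)
      _ = 1 / a := by
          have hx' : x ≠ 0 := ne_of_lt hx
          rw [Real.exp_neg]
          field_simp
  · simp [hx, ha.le]
  · -- x > 0
    have hb2 : |I| ≤ Real.exp (-(a*x^2/2)) / (a * x) :=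
      le_trans (habsI _) (tailBound a ha x hx)
    have hax : |x| = x := abs_of_pos hx
    rw [hax]
    calc x * Real.exp (a*x^2/2) * |I|
        ≤ x * Real.exp (a*x^2/2) * (Real.exp (-(a*x^2/2)) / (a * x)) := by
          apply mul_le_mul_of_nonneg_left hb2 (by positivity)
      _ = 1 / a := by
          have hx' : x ≠ 0 := ne_of_gt hx
          rw [Real.exp_neg]
          field_simp

end
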